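/- Let G₁ and G₂ be simple connected graphs with n₂ = |V(G₂)| vertices in G₂ and m₁ = |E(G₁)|, m₂ = |E(G₂)| edges. Then the F-index of the edge T-join satisfies F(G₁ ∨̱_T G₂) = 8F(G₁) + F(G₂) + 3n₂²M₁(G₁) + 3m₁M₁(G₂) + M₄(G₁) + 3n₂HM(G₁) + 3ReZM(G₁) + m₁²(6m₂ + m₁n₂) + m₁n₂³. -/

import Mathlib

/-- The subdivision graph `S(G)`: a new vertex is inserted into each edge of `G`
(each edge is replaced by a path of length 2). The inserted vertices form the
right summand `↥G.edgeSet`. -/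
def Sgraph {V : Type*} (G : SimpleGraph V) : SimpleGraph (V ⊕ ↥G.edgeSet) where
  Adj x y :=
    match x, y with
    | Sum.inl v, Sum.inr e => v ∈ (e : Sym2 V)
    | Sum.inr e, Sum.inl v => v ∈ (e : Sym2 V)
    | _, _ => False
  symm := by constructor; rintro (v | e) (w | f) h <;> exact h
  loopless := by constructor; rintro (v | e) h <;> exact h

/-- The graph `R(G)`: obtained from `G` by inserting a new vertex into each edge of `G`
and joining each new vertex to the end vertices of its corresponding edge. -/
def Rgraph {V : Type*} (G : SimpleGraph V) : SimpleGraph (V ⊕ ↥G.edgeSet) where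
  Adj x y :=
    match x, y with
    | Sum.inl v, Sum.inl w => G.Adj v w
    | Sum.inl v, Sum.inr e => v ∈ (e : Sym2 V)
    | Sum.inr e, Sum.inl v => v ∈ (e : Sym2 V)
    | Sum.inr _, Sum.inr _ => False
  symm := by
    constructor; rintro (v | e) (w | f) h
    · exact G.adj_symm h
    · exact h
    · exact h
    · exact h
  loopless := by
    constructor; rintro (v | e) h
    · exact G.irrefl h
    · exact h

/-- The graph `Q(G)`: obtained from `G` by inserting a new vertex into each edge of `G`,
then joining by edges those pairs of new vertices lying on adjacent edges of `G`. -/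
def Qgraph {V : Type*} (G : SimpleGraph V) : SimpleGraph (V ⊕ ↥G.edgeSet) where
  Adj x y :=
    match x, y with
    | Sum.inl _, Sum.inl _ => False
    | Sum.inl v, Sum.inr e => v ∈ (e : Sym2 V)
    | Sum.inr e, Sum.inl v => v ∈ (e : Sym2 V)
    | Sum.inr e, Sum.inr f => e ≠ f ∧ ∃ v, v ∈ (e : Sym2 V) ∧ v ∈ (f : Sym2 V)
  symm := by
    constructor; rintro (v | e) (w | f) h
    · exact h
    · exact h
    · exact h
    · exact ⟨h.1.symm, by obtain ⟨v, h1, h2⟩ := h.2; exact ⟨v, h2, h1⟩⟩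
  loopless := by
    constructor; rintro (v | e) h
    · exact h
    · exact h.1 rfl

/-- The total graph `T(G)`: obtained from `G` by inserting a new vertex into each edge,
joining each new vertex to the end vertices of its corresponding edge, and joining by
edges those pairs of new vertices lying on adjacent edges of `G`. -/
def Tgraph {V : Type*} (G : SimpleGraph V) : SimpleGraph (V ⊕ ↥G.edgeSet) where
  Adj x y :=
    match x, y with
    | Sum.inl v, Sum.inl w => G.Adj v w
    | Sum.inl v, Sum.inr e => v ∈ (e : Sym2 V)
    | Sum.inr e, Sum.inl v => v ∈ (e : Sym2 V)
    | Sum.inr e, Sum.inr f => e ≠ f ∧ ∃ v, v ∈ (e : Sym2 V) ∧ v ∈ (f : Sym2 V)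
  symm := by
    constructor; rintro (v | e) (w | f) h
    · exact G.adj_symm h
    · exact h
    · exact h
    · exact ⟨h.1.symm, by obtain ⟨v, h1, h2⟩ := h.2; exact ⟨v, h2, h1⟩⟩
  loopless := by
    constructor; rintro (v | e) h
    · exact G.irrefl h
    · exact h.1 rfl

/-- The disjoint union of `H` and `K` together with all edges joining a vertex `a` of `H`
with `P a` to every vertex of `K`. -/
def joinOn {A B : Type*} (H : SimpleGraph A) (K : SimpleGraph B) (P : A → Prop) :
    SimpleGraph (A ⊕ B) where
  Adj x y :=
    match x, y with
    | Sum.inl a, Sum.inl a' => H.Adj a a'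
    | Sum.inr b, Sum.inr b' => K.Adj b b'
    | Sum.inl a, Sum.inr _ => P a
    | Sum.inr _, Sum.inl a => P a
  symm := by
    constructor; rintro (a | b) (a' | b') h
    · exact H.adj_symm h
    · exact h
    · exact h
    · exact K.adj_symm h
  loopless := by
    constructor; rintro (a | b) h
    · exact H.irrefl h
    · exact K.irrefl h

/-- The vertex S-join `G₁ ∨̇_S G₂`: obtained from `S(G₁)` and `G₂` by joining each vertex
of `V(G₁)` to every vertex of `G₂`. -/
def vertexSJoin {V₁ V₂ : Type*} (G₁ : SimpleGraph V₁) (G₂ : SimpleGraph V₂) :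
    SimpleGraph ((V₁ ⊕ ↥G₁.edgeSet) ⊕ V₂) :=
  joinOn (Sgraph G₁) G₂ (fun x => x.isLeft)

/-- The edge S-join `G₁ ∨̱_S G₂`: obtained from `S(G₁)` and `G₂` by joining each inserted
vertex (each vertex of `I(G₁)`) to every vertex of `G₂`. -/
def edgeSJoin {V₁ V₂ : Type*} (G₁ : SimpleGraph V₁) (G₂ : SimpleGraph V₂) :
    SimpleGraph ((V₁ ⊕ ↥G₁.edgeSet) ⊕ V₂) :=
  joinOn (Sgraph G₁) G₂ (fun x => x.isRight)

/-- The vertex R-join `G₁ ∨̇_R G₂`. -/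
def vertexRJoin {V₁ V₂ : Type*} (G₁ : SimpleGraph V₁) (G₂ : SimpleGraph V₂) :
    SimpleGraph ((V₁ ⊕ ↥G₁.edgeSet) ⊕ V₂) :=
  joinOn (Rgraph G₁) G₂ (fun x => x.isLeft)

/-- The edge R-join `G₁ ∨̱_R G₂`. -/
def edgeRJoin {V₁ V₂ : Type*} (G₁ : SimpleGraph V₁) (G₂ : SimpleGraph V₂) :
    SimpleGraph ((V₁ ⊕ ↥G₁.edgeSet) ⊕ V₂) :=
  joinOn (Rgraph G₁) G₂ (fun x => x.isRight)

/-- The vertex Q-join `G₁ ∨̇_Q G₂`. -/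
def vertexQJoin {V₁ V₂ : Type*} (G₁ : SimpleGraph V₁) (G₂ : SimpleGraph V₂) :
    SimpleGraph ((V₁ ⊕ ↥G₁.edgeSet) ⊕ V₂) :=
  joinOn (Qgraph G₁) G₂ (fun x => x.isLeft)

/-- The edge Q-join `G₁ ∨̱_Q G₂`. -/
def edgeQJoin {V₁ V₂ : Type*} (G₁ : SimpleGraph V₁) (G₂ : SimpleGraph V₂) :
    SimpleGraph ((V₁ ⊕ ↥G₁.edgeSet) ⊕ V₂) :=
  joinOn (Qgraph G₁) G₂ (fun x => x.isRight)

/-- The vertex T-join `G₁ ∨̇_T G₂`. -/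
def vertexTJoin {V₁ V₂ : Type*} (G₁ : SimpleGraph V₁) (G₂ : SimpleGraph V₂) :
    SimpleGraph ((V₁ ⊕ ↥G₁.edgeSet) ⊕ V₂) :=
  joinOn (Tgraph G₁) G₂ (fun x => x.isLeft)

/-- The edge T-join `G₁ ∨̱_T G₂`. -/
def edgeTJoin {V₁ V₂ : Type*} (G₁ : SimpleGraph V₁) (G₂ : SimpleGraph V₂) :
    SimpleGraph ((V₁ ⊕ ↥G₁.edgeSet) ⊕ V₂) :=
  joinOn (Tgraph G₁) G₂ (fun x => x.isRight)

/-- Degree of a vertex in a graph on a finite vertex type. -/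
noncomputable def gdeg {V : Type*} [Finite V] (G : SimpleGraph V) (v : V) : ℕ :=
  haveI : Fintype ↥(G.neighborSet v) := Fintype.ofFinite _
  G.degree v

/-- The forgotten topological index (F-index): `F(G) = ∑_{v ∈ V(G)} d_G(v)³`. -/
noncomputable def Findex {V : Type*} [Finite V] (G : SimpleGraph V) : ℕ :=
  haveI := Fintype.ofFinite V
  ∑ v : V, gdeg G v ^ 3

/-- The first Zagreb index: `M₁(G) = ∑_{v ∈ V(G)} d_G(v)²`. -/
noncomputable def M1 {V : Type*} [Finite V] (G : SimpleGraph V) : ℕ :=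
  haveI := Fintype.ofFinite V
  ∑ v : V, gdeg G v ^ 2

/-- `M₄(G) = ∑_{v ∈ V(G)} d_G(v)⁴`. -/
noncomputable def M4 {V : Type*} [Finite V] (G : SimpleGraph V) : ℕ :=
  haveI := Fintype.ofFinite V
  ∑ v : V, gdeg G v ^ 4

/-- The hyper Zagreb index: `HM(G) = ∑_{uv ∈ E(G)} (d_G(u) + d_G(v))²`. -/
noncomputable def HM {V : Type*} [Finite V] (G : SimpleGraph V) : ℕ :=
  haveI : Fintype ↥G.edgeSet := Fintype.ofFinite _
  ∑ e : ↥G.edgeSet,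
    Sym2.lift ⟨fun u v => (gdeg G u + gdeg G v) ^ 2,
      fun u v => by dsimp only; rw [add_comm]⟩ (e : Sym2 V)

/-- The redefined Zagreb index:
`ReZM(G) = ∑_{uv ∈ E(G)} d_G(u) d_G(v) (d_G(u) + d_G(v))`. -/
noncomputable def ReZM {V : Type*} [Finite V] (G : SimpleGraph V) : ℕ :=
  haveI : Fintype ↥G.edgeSet := Fintype.ofFinite _
  ∑ e : ↥G.edgeSet,
    Sym2.lift ⟨fun u v => gdeg G u * gdeg G v * (gdeg G u + gdeg G v),
      fun u v => by dsimp only; ring⟩ (e : Sym2 V)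

/-- The number of edges of `G`. -/
noncomputable def numEdges {V : Type*} (G : SimpleGraph V) : ℕ :=
  Nat.card ↥G.edgeSet

section Helpers
open SimpleGraph

variable {V : Type*} [Finite V] (G : SimpleGraph V)

lemma gdeg_eq_ncard (v : V) : gdeg G v = (G.neighborSet v).ncard := by
  letI : Fintype ↥(G.neighborSet v) := Fintype.ofFinite _
  show G.degree v = _
  rw [← SimpleGraph.card_neighborSet_eq_degree, ← Nat.card_eq_fintype_card,
    Nat.card_coe_set_eq]

lemma ncard_incidenceSet (v : V) : (G.incidenceSet v).ncard = gdeg G v := by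
  classical
  rw [← Nat.card_coe_set_eq, Nat.card_congr (G.incidenceSetEquivNeighborSet v),
    Nat.card_coe_set_eq, gdeg_eq_ncard]

lemma val_image_incident (v : V) :
    Subtype.val '' {e : G.edgeSet | v ∈ (e : Sym2 V)} = G.incidenceSet v := by
  ext E
  constructor
  · rintro ⟨⟨E, hE⟩, hv, rfl⟩; exact ⟨hE, hv⟩
  · rintro ⟨hE, hv⟩; exact ⟨⟨E, hE⟩, hv, rfl⟩

lemma ncard_incident_subtype (v : V) :
    {e : G.edgeSet | v ∈ (e : Sym2 V)}.ncard = gdeg G v := by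
  rw [← ncard_incidenceSet, ← val_image_incident,
    Set.ncard_image_of_injective _ Subtype.val_injective]

lemma disj_inl_inr {α β : Type*} (S : Set α) (T : Set β) :
    Disjoint (Sum.inl '' S) (Sum.inr '' T : Set (α ⊕ β)) := by
  rw [Set.disjoint_left]
  rintro x ⟨a, _, rfl⟩ ⟨b, _, h⟩
  cases h

lemma edge_rep (e : G.edgeSet) : ∃ u v, G.Adj u v ∧ (e : Sym2 V) = s(u, v) := by
  obtain ⟨E, hE⟩ := e
  revert hE
  refine Sym2.ind (fun u v hE => ⟨u, v, G.mem_edgeSet.1 hE, rfl⟩) E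

end Helpers
section TDeg
open SimpleGraph
set_option linter.unusedSectionVars false

variable {V : Type*} [Finite V] (G : SimpleGraph V)

lemma nbr_T_inl (v : V) : (Tgraph G).neighborSet (Sum.inl v) =
    Sum.inl '' G.neighborSet v ∪ Sum.inr '' {e : G.edgeSet | v ∈ (e : Sym2 V)} := by
  ext (w | e) <;> simp [Tgraph, SimpleGraph.neighborSet]

lemma gdeg_T_inl (v : V) : gdeg (Tgraph G) (Sum.inl v) = 2 * gdeg G v := by
  rw [gdeg_eq_ncard, nbr_T_inl,
    Set.ncard_union_eq (disj_inl_inr _ _) (Set.toFinite _) (Set.toFinite _),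
    Set.ncard_image_of_injective _ Sum.inl_injective,
    Set.ncard_image_of_injective _ Sum.inr_injective,
    ncard_incident_subtype, ← gdeg_eq_ncard, two_mul]

lemma gdeg_T_inr (e : G.edgeSet) (u v : V) (hadj : G.Adj u v) (huv : (e : Sym2 V) = s(u, v)) :
    gdeg (Tgraph G) (Sum.inr e) = gdeg G u + gdeg G v := by
  classical
  have hne : u ≠ v := hadj.ne
  have h1 : (Tgraph G).neighborSet (Sum.inr e) = Sum.inl '' {u, v} ∪
      Sum.inr '' {f : G.edgeSet | e ≠ f ∧ ∃ w, w ∈ (e : Sym2 V) ∧ w ∈ (f : Sym2 V)} := by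
    ext (w | f)
    · simp [Tgraph, SimpleGraph.neighborSet, huv, Sym2.mem_iff]
    · simp [Tgraph, SimpleGraph.neighborSet]
  have h2 : Subtype.val '' {f : G.edgeSet | e ≠ f ∧ ∃ w, w ∈ (e : Sym2 V) ∧ w ∈ (f : Sym2 V)} =
      (G.incidenceSet u ∪ G.incidenceSet v) \ {s(u, v)} := by
    ext E
    constructor
    · rintro ⟨⟨E, hE⟩, ⟨hne', w, hw1, hw2⟩, rfl⟩
      rw [huv, Sym2.mem_iff] at hw1
      refine ⟨?_, ?_⟩
      · rcases hw1 with rfl | rfl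
        · exact Or.inl ⟨hE, hw2⟩
        · exact Or.inr ⟨hE, hw2⟩
      · intro hEs
        rw [Set.mem_singleton_iff] at hEs
        exact hne' (Subtype.ext (by rw [huv, hEs]))
    · rintro ⟨hE, hnE⟩
      rw [Set.mem_singleton_iff] at hnE
      have hE' : E ∈ G.edgeSet := by rcases hE with h | h <;> exact h.1
      refine ⟨⟨E, hE'⟩, ⟨?_, ?_⟩, rfl⟩
      · intro h
        apply hnE
        rw [← huv]
        exact congrArg Subtype.val h.symm
      · rcases hE with h | h
        · exact ⟨u, by rw [huv]; exact Sym2.mem_mk_left u v, h.2⟩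
        · exact ⟨v, by rw [huv]; exact Sym2.mem_mk_right u v, h.2⟩
  have h3 : ((G.incidenceSet u ∪ G.incidenceSet v) \ {s(u, v)}).ncard + 1 =
      (G.incidenceSet u ∪ G.incidenceSet v).ncard :=
    Set.ncard_diff_singleton_add_one
      (Or.inl (G.mk'_mem_incidenceSet_left_iff.2 hadj)) (Set.toFinite _)
  have h4 : (G.incidenceSet u ∪ G.incidenceSet v).ncard +
      ((G.incidenceSet u ∩ G.incidenceSet v)).ncard =
      (G.incidenceSet u).ncard + (G.incidenceSet v).ncard :=
    Set.ncard_union_add_ncard_inter _ _ (Set.toFinite _) (Set.toFinite _)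
  rw [G.incidenceSet_inter_incidenceSet_of_adj hadj, Set.ncard_singleton,
    ncard_incidenceSet, ncard_incidenceSet] at h4
  have h5 : {f : G.edgeSet | e ≠ f ∧ ∃ w, w ∈ (e : Sym2 V) ∧ w ∈ (f : Sym2 V)}.ncard =
      ((G.incidenceSet u ∪ G.incidenceSet v) \ {s(u, v)}).ncard := by
    rw [← h2, Set.ncard_image_of_injective _ Subtype.val_injective]
  rw [gdeg_eq_ncard, h1,
    Set.ncard_union_eq (disj_inl_inr _ _) (Set.toFinite _) (Set.toFinite _),
    Set.ncard_image_of_injective _ Sum.inl_injective,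
    Set.ncard_image_of_injective _ Sum.inr_injective,
    Set.ncard_pair hne, h5]
  omega

end TDeg
section JoinDeg
open SimpleGraph
set_option linter.unusedSectionVars false

variable {V₁ V₂ : Type*} [Finite V₁] [Finite V₂] (G₁ : SimpleGraph V₁) (G₂ : SimpleGraph V₂)

lemma gdeg_J_inl_inl (v : V₁) :
    gdeg (edgeTJoin G₁ G₂) (Sum.inl (Sum.inl v)) = 2 * gdeg G₁ v := by
  have h : (edgeTJoin G₁ G₂).neighborSet (Sum.inl (Sum.inl v)) =
      Sum.inl '' (Tgraph G₁).neighborSet (Sum.inl v) := by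
    ext (x | w) <;> simp [edgeTJoin, joinOn, SimpleGraph.neighborSet]
  rw [gdeg_eq_ncard, h, Set.ncard_image_of_injective _ Sum.inl_injective,
    ← gdeg_eq_ncard, gdeg_T_inl]

lemma gdeg_J_inl_inr (e : G₁.edgeSet) :
    gdeg (edgeTJoin G₁ G₂) (Sum.inl (Sum.inr e)) =
      gdeg (Tgraph G₁) (Sum.inr e) + Nat.card V₂ := by
  have h : (edgeTJoin G₁ G₂).neighborSet (Sum.inl (Sum.inr e)) =
      Sum.inl '' (Tgraph G₁).neighborSet (Sum.inr e) ∪ Sum.inr '' (Set.univ : Set V₂) := by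
    ext (x | w) <;> simp [edgeTJoin, joinOn, SimpleGraph.neighborSet]
  rw [gdeg_eq_ncard, h,
    Set.ncard_union_eq (disj_inl_inr _ _) (Set.toFinite _) (Set.toFinite _),
    Set.ncard_image_of_injective _ Sum.inl_injective,
    Set.ncard_image_of_injective _ Sum.inr_injective,
    ← gdeg_eq_ncard, Set.ncard_univ]

lemma gdeg_J_inr (w : V₂) :
    gdeg (edgeTJoin G₁ G₂) (Sum.inr w) = gdeg G₂ w + numEdges G₁ := by
  have h : (edgeTJoin G₁ G₂).neighborSet (Sum.inr w) =
      Sum.inl '' (Sum.inr '' (Set.univ : Set ↥G₁.edgeSet)) ∪ Sum.inr '' G₂.neighborSet w := by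
    ext (x | w')
    · cases x <;> simp [edgeTJoin, joinOn, SimpleGraph.neighborSet]
    · simp [edgeTJoin, joinOn, SimpleGraph.neighborSet]
  rw [gdeg_eq_ncard, h,
    Set.ncard_union_eq (disj_inl_inr _ _) (Set.toFinite _) (Set.toFinite _),
    Set.ncard_image_of_injective _ Sum.inl_injective,
    Set.ncard_image_of_injective _ Sum.inr_injective,
    Set.ncard_image_of_injective _ Sum.inr_injective,
    ← gdeg_eq_ncard, Set.ncard_univ, numEdges, add_comm]

end JoinDeg
section Sums
open SimpleGraph
set_option linter.unusedSectionVars false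

lemma sum_ofFinite_sum {α β : Type*} [Finite α] [Finite β] (f : α ⊕ β → ℕ) :
    (letI := Fintype.ofFinite (α ⊕ β); ∑ x : α ⊕ β, f x)
      = (letI := Fintype.ofFinite α; ∑ a : α, f (Sum.inl a))
        + (letI := Fintype.ofFinite β; ∑ b : β, f (Sum.inr b)) := by
  letI := Fintype.ofFinite α
  letI := Fintype.ofFinite β
  rw [Subsingleton.elim (Fintype.ofFinite (α ⊕ β)) (inferInstance : Fintype (α ⊕ β))]
  exact Fintype.sum_sum_type f

variable {V : Type*} [Finite V] (G : SimpleGraph V)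

lemma sum_lift_add (g : V → ℕ) :
    (letI := Fintype.ofFinite ↥G.edgeSet;
      ∑ e : G.edgeSet, Sym2.lift ⟨fun u v => g u + g v, fun _ _ => add_comm _ _⟩ (e : Sym2 V))
    = (letI := Fintype.ofFinite V; ∑ v : V, gdeg G v * g v) := by
  classical
  letI := Fintype.ofFinite ↥G.edgeSet
  letI := Fintype.ofFinite V
  have step : ∀ e : G.edgeSet,
      Sym2.lift ⟨fun u v => g u + g v, fun _ _ => add_comm _ _⟩ (e : Sym2 V)
      = ∑ v : V, if v ∈ (e : Sym2 V) then g v else 0 := by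
    intro e
    obtain ⟨u, v, hadj, huv⟩ := edge_rep G e
    rw [huv, Sym2.lift_mk]
    have h1 : ∀ x : V, (if x ∈ (s(u,v) : Sym2 V) then g x else 0)
        = if x = u ∨ x = v then g x else 0 := by
      intro x; simp [Sym2.mem_iff]
    rw [Finset.sum_congr rfl fun x _ => h1 x, Finset.sum_ite, Finset.sum_const_zero, add_zero]
    have h2 : Finset.univ.filter (fun x => x = u ∨ x = v) = {u, v} := by
      ext x; simp
    rw [h2, Finset.sum_pair hadj.ne]
  rw [Finset.sum_congr rfl fun e _ => step e, Finset.sum_comm]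
  refine Finset.sum_congr rfl fun v _ => ?_
  rw [Finset.sum_ite, Finset.sum_const_zero, add_zero, Finset.sum_const, smul_eq_mul]
  congr 1
  rw [← ncard_incident_subtype G v, Set.ncard_eq_toFinset_card', Set.toFinset_setOf]

lemma sum_gdeg :
    (letI := Fintype.ofFinite V; ∑ v : V, gdeg G v) = 2 * numEdges G := by
  letI := Fintype.ofFinite ↥G.edgeSet
  letI := Fintype.ofFinite V
  have h := sum_lift_add G (fun _ => 1)
  have h2 : ∀ e : G.edgeSet,
      Sym2.lift ⟨fun u v => (1 : ℕ) + 1, fun _ _ => add_comm _ _⟩ (e : Sym2 V) = 2 := by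
    intro e
    obtain ⟨u, v, hadj, huv⟩ := edge_rep G e
    rw [huv, Sym2.lift_mk]
  rw [Finset.sum_congr rfl fun e _ => h2 e, Finset.sum_const, smul_eq_mul, mul_comm,
    Finset.card_univ, ← Nat.card_eq_fintype_card] at h
  calc ∑ v : V, gdeg G v = ∑ v : V, gdeg G v * 1 := by simp
    _ = 2 * Nat.card ↥G.edgeSet := h.symm
    _ = 2 * numEdges G := rfl

variable {V₁ V₂ : Type*} [Finite V₁] [Finite V₂] (G₁ : SimpleGraph V₁) (G₂ : SimpleGraph V₂)

lemma lemA :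
    (letI := Fintype.ofFinite V₁;
      ∑ v : V₁, gdeg (edgeTJoin G₁ G₂) (Sum.inl (Sum.inl v)) ^ 3) = 8 * Findex G₁ := by
  letI := Fintype.ofFinite V₁
  have hF : Findex G₁ = ∑ v : V₁, gdeg G₁ v ^ 3 := rfl
  rw [hF, Finset.mul_sum]
  refine Finset.sum_congr rfl fun v _ => ?_
  rw [gdeg_J_inl_inl]; ring

lemma lemC :
    (letI := Fintype.ofFinite V₂;
      ∑ w : V₂, gdeg (edgeTJoin G₁ G₂) (Sum.inr w) ^ 3)
    = Findex G₂ + 3 * numEdges G₁ * M1 G₂ + 6 * numEdges G₁ ^ 2 * numEdges G₂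
      + Nat.card V₂ * numEdges G₁ ^ 3 := by
  letI := Fintype.ofFinite V₂
  calc (∑ w : V₂, gdeg (edgeTJoin G₁ G₂) (Sum.inr w) ^ 3)
      = ∑ w : V₂, (gdeg G₂ w ^ 3 + 3 * numEdges G₁ * gdeg G₂ w ^ 2
          + 3 * numEdges G₁ ^ 2 * gdeg G₂ w + numEdges G₁ ^ 3) := by
        refine Finset.sum_congr rfl fun w _ => ?_
        rw [gdeg_J_inr]; ring
    _ = Findex G₂ + 3 * numEdges G₁ * M1 G₂ + 6 * numEdges G₁ ^ 2 * numEdges G₂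
        + Nat.card V₂ * numEdges G₁ ^ 3 := by
        rw [Finset.sum_add_distrib, Finset.sum_add_distrib, Finset.sum_add_distrib,
          ← Finset.mul_sum, ← Finset.mul_sum, Finset.sum_const, smul_eq_mul]
        have c1 : (∑ w : V₂, gdeg G₂ w ^ 3) = Findex G₂ := rfl
        have c2 : (∑ w : V₂, gdeg G₂ w ^ 2) = M1 G₂ := rfl
        have c3 : (∑ w : V₂, gdeg G₂ w) = 2 * numEdges G₂ := sum_gdeg G₂
        have c4 : (Finset.univ : Finset V₂).card = Nat.card V₂ := by
          rw [Finset.card_univ, Nat.card_eq_fintype_card]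
        rw [c1, c2, c3, c4]; ring

lemma lemB :
    (letI := Fintype.ofFinite ↥G₁.edgeSet;
      ∑ e : G₁.edgeSet, gdeg (edgeTJoin G₁ G₂) (Sum.inl (Sum.inr e)) ^ 3)
    = M4 G₁ + 3 * ReZM G₁ + 3 * Nat.card V₂ * HM G₁ + 3 * Nat.card V₂ ^ 2 * M1 G₁
      + numEdges G₁ * Nat.card V₂ ^ 3 := by
  classical
  letI := Fintype.ofFinite ↥G₁.edgeSet
  letI := Fintype.ofFinite V₁
  have hdeg : ∀ e : G₁.edgeSet,
      gdeg (edgeTJoin G₁ G₂) (Sum.inl (Sum.inr e))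
      = Sym2.lift ⟨fun u v => gdeg G₁ u + gdeg G₁ v, fun _ _ => add_comm _ _⟩ (e : Sym2 V₁)
        + Nat.card V₂ := by
    intro e
    obtain ⟨u, v, hadj, huv⟩ := edge_rep G₁ e
    rw [gdeg_J_inl_inr, gdeg_T_inr G₁ e u v hadj huv, huv, Sym2.lift_mk]
  calc (∑ e : G₁.edgeSet, gdeg (edgeTJoin G₁ G₂) (Sum.inl (Sum.inr e)) ^ 3)
      = ∑ e : G₁.edgeSet,
          (Sym2.lift ⟨fun u v => gdeg G₁ u ^ 3 + gdeg G₁ v ^ 3, fun _ _ => add_comm _ _⟩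
              (e : Sym2 V₁)
            + 3 * Sym2.lift ⟨fun u v => gdeg G₁ u * gdeg G₁ v * (gdeg G₁ u + gdeg G₁ v),
                fun u v => by dsimp only; ring⟩ (e : Sym2 V₁)
            + 3 * Nat.card V₂ * Sym2.lift ⟨fun u v => (gdeg G₁ u + gdeg G₁ v) ^ 2,
                fun u v => by dsimp only; rw [add_comm]⟩ (e : Sym2 V₁)
            + 3 * Nat.card V₂ ^ 2 * Sym2.lift ⟨fun u v => gdeg G₁ u + gdeg G₁ v,
                fun _ _ => add_comm _ _⟩ (e : Sym2 V₁)
            + Nat.card V₂ ^ 3) := by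
        refine Finset.sum_congr rfl fun e _ => ?_
        obtain ⟨u, v, hadj, huv⟩ := edge_rep G₁ e
        rw [hdeg e, huv]
        simp only [Sym2.lift_mk]
        ring
    _ = M4 G₁ + 3 * ReZM G₁ + 3 * Nat.card V₂ * HM G₁ + 3 * Nat.card V₂ ^ 2 * M1 G₁
        + numEdges G₁ * Nat.card V₂ ^ 3 := by
        rw [Finset.sum_add_distrib, Finset.sum_add_distrib, Finset.sum_add_distrib,
          Finset.sum_add_distrib, ← Finset.mul_sum, ← Finset.mul_sum, ← Finset.mul_sum,
          Finset.sum_const, smul_eq_mul]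
        have c1 : (∑ e : G₁.edgeSet,
            Sym2.lift ⟨fun u v => gdeg G₁ u ^ 3 + gdeg G₁ v ^ 3, fun _ _ => add_comm _ _⟩
              (e : Sym2 V₁)) = M4 G₁ := by
          refine (sum_lift_add G₁ (fun v => gdeg G₁ v ^ 3)).trans ?_
          have hM : M4 G₁ = ∑ v : V₁, gdeg G₁ v ^ 4 := rfl
          rw [hM]
          exact Finset.sum_congr rfl fun v _ => by ring
        have c2 : (∑ e : G₁.edgeSet,
            Sym2.lift ⟨fun u v => gdeg G₁ u * gdeg G₁ v * (gdeg G₁ u + gdeg G₁ v),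
              fun u v => by dsimp only; ring⟩ (e : Sym2 V₁)) = ReZM G₁ := rfl
        have c3 : (∑ e : G₁.edgeSet,
            Sym2.lift ⟨fun u v => (gdeg G₁ u + gdeg G₁ v) ^ 2,
              fun u v => by dsimp only; rw [add_comm]⟩ (e : Sym2 V₁)) = HM G₁ := rfl
        have c4 : (∑ e : G₁.edgeSet,
            Sym2.lift ⟨fun u v => gdeg G₁ u + gdeg G₁ v, fun _ _ => add_comm _ _⟩
              (e : Sym2 V₁)) = M1 G₁ := by
          refine (sum_lift_add G₁ (gdeg G₁)).trans ?_
          have hM : M1 G₁ = ∑ v : V₁, gdeg G₁ v ^ 2 := rfl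
          rw [hM]
          exact Finset.sum_congr rfl fun v _ => by ring
        have c5 : (Finset.univ : Finset ↥G₁.edgeSet).card = numEdges G₁ := by
          rw [Finset.card_univ, ← Nat.card_eq_fintype_card]; rfl
        rw [c1, c2, c3, c4, c5]
end Sums

theorem Findex_edgeTJoin {V₁ V₂ : Type*} [Finite V₁] [Finite V₂]
    (G₁ : SimpleGraph V₁) (G₂ : SimpleGraph V₂)
    (hc₁ : G₁.Connected) (hc₂ : G₂.Connected)
    (n₂ m₁ m₂ : ℕ)
    (hn₂ : n₂ = Nat.card V₂)
    (hm₁ : m₁ = numEdges G₁) (hm₂ : m₂ = numEdges G₂) :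
    (Findex (edgeTJoin G₁ G₂) : ℤ) =
      8 * (Findex G₁ : ℤ) + (Findex G₂ : ℤ) + 3 * (n₂ : ℤ) ^ 2 * (M1 G₁ : ℤ) + 3 * (m₁ : ℤ) * (M1 G₂ : ℤ)
        + (M4 G₁ : ℤ) + 3 * (n₂ : ℤ) * (HM G₁ : ℤ) + 3 * (ReZM G₁ : ℤ)
        + (m₁ : ℤ) ^ 2 * (6 * (m₂ : ℤ) + (m₁ : ℤ) * (n₂ : ℤ)) + (m₁ : ℤ) * (n₂ : ℤ) ^ 3 := by
  have h0 : Findex (edgeTJoin G₁ G₂)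
      = (letI := Fintype.ofFinite (V₁ ⊕ ↥G₁.edgeSet);
          ∑ a : V₁ ⊕ ↥G₁.edgeSet, gdeg (edgeTJoin G₁ G₂) (Sum.inl a) ^ 3)
        + (letI := Fintype.ofFinite V₂;
          ∑ w : V₂, gdeg (edgeTJoin G₁ G₂) (Sum.inr w) ^ 3) :=
    sum_ofFinite_sum (fun x => gdeg (edgeTJoin G₁ G₂) x ^ 3)
  have h1 : (letI := Fintype.ofFinite (V₁ ⊕ ↥G₁.edgeSet);
        ∑ a : V₁ ⊕ ↥G₁.edgeSet, gdeg (edgeTJoin G₁ G₂) (Sum.inl a) ^ 3)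
      = (letI := Fintype.ofFinite V₁;
          ∑ v : V₁, gdeg (edgeTJoin G₁ G₂) (Sum.inl (Sum.inl v)) ^ 3)
        + (letI := Fintype.ofFinite ↥G₁.edgeSet;
          ∑ e : G₁.edgeSet, gdeg (edgeTJoin G₁ G₂) (Sum.inl (Sum.inr e)) ^ 3) :=
    sum_ofFinite_sum (fun a => gdeg (edgeTJoin G₁ G₂) (Sum.inl a) ^ 3)
  have key : Findex (edgeTJoin G₁ G₂)
      = 8 * Findex G₁
        + (M4 G₁ + 3 * ReZM G₁ + 3 * Nat.card V₂ * HM G₁ + 3 * Nat.card V₂ ^ 2 * M1 G₁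
            + numEdges G₁ * Nat.card V₂ ^ 3)
        + (Findex G₂ + 3 * numEdges G₁ * M1 G₂ + 6 * numEdges G₁ ^ 2 * numEdges G₂
            + Nat.card V₂ * numEdges G₁ ^ 3) := by
    rw [h0, h1, lemA, lemB, lemC]
  rw [key, ← hn₂, ← hm₁, ← hm₂]
  push_cast
  ring
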